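/- Let E be a real Hilbert space, γ > 0, and 0 < μ ≤ 1/γ. Let (L_t)_{t ∈ ℕ} be a sequence of nonnegative differentiable functions L_t : E → ℝ whose gradients ∇L_t are all γ-Lipschitz, let (v_t)_{t ∈ ℕ} be a sequence in E, and define θ_{t+1} := θ_t − μ·v_t from an initial point θ_0 ∈ E. Assume that for every t, L_{t+1}(θ_{t+1}) ≤ L_t(θ_{t+1}). Suppose moreover there exist T_ε, T ∈ ℕ with T_ε < T and a constant c ≥ 0 such that ‖∇L_t(θ_t) − ∇L_T(θ_T)‖ ≤ c for all t with T_ε ≤ t < T, and c ≤ ‖∇L_T(θ_T)‖. Then ((T − T_ε)/T)·(‖∇L_T(θ_T)‖ − c)² ≤ 2·L_0(θ_0)/(μ·T) + (1/T)·Σ_{t=0}^{T−1} ‖v_t − ∇L_t(θ_t)‖². (Exact-constant deterministic core of the convergence theorem: the final gradient norm is controlled by an O(1/T) term plus the average squared update error, up to the gradient-stability constant c near the end of training.) -/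

import Mathlib

open Finset

open InnerProductSpace RealInnerProductSpace

lemma descent_lemma
    {E : Type*} [NormedAddCommGroup E] [InnerProductSpace ℝ E] [CompleteSpace E]
    (f : E → ℝ) (hf : Differentiable ℝ f) (γ : ℝ) (hγ : 0 ≤ γ)
    (hlip : ∀ x y : E, ‖gradient f x - gradient f y‖ ≤ γ * ‖x - y‖)
    (x y : E) :
    f y ≤ f x + ⟪gradient f x, y - x⟫_ℝ + γ / 2 * ‖y - x‖ ^ 2 := by
  set d := y - x with hd
  set φ : ℝ → ℝ := fun s => f (x + s • d) - s * ⟪gradient f x, d⟫_ℝ - γ * ‖d‖ ^ 2 * s ^ 2 / 2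
    with hφ
  have hder : ∀ s : ℝ, HasDerivAt φ
      (⟪gradient f (x + s • d), d⟫_ℝ - ⟪gradient f x, d⟫_ℝ - γ * ‖d‖ ^ 2 * s) s := by
    intro s
    have hline : HasDerivAt (fun s : ℝ => x + s • d) d s := by
      simpa using ((hasDerivAt_id s).smul_const d).const_add x
    have hcomp : HasDerivAt (fun s : ℝ => f (x + s • d))
        (⟪gradient f (x + s • d), d⟫_ℝ) s := by
      have h1 := ((hf (x + s • d)).hasGradientAt.hasFDerivAt).comp_hasDerivAt s hline
      simpa [InnerProductSpace.toDual_apply_apply, Function.comp_def] using h1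
    have h2 : HasDerivAt (fun s : ℝ => s * ⟪gradient f x, d⟫_ℝ)
        (⟪gradient f x, d⟫_ℝ) s := by
      simpa using (hasDerivAt_id s).mul_const (⟪gradient f x, d⟫_ℝ)
    have h3 : HasDerivAt (fun s : ℝ => γ * ‖d‖ ^ 2 * s ^ 2 / 2)
        (γ * ‖d‖ ^ 2 * s) s := by
      have := ((hasDerivAt_pow 2 s).const_mul (γ * ‖d‖ ^ 2)).div_const 2
      refine this.congr_deriv ?_
      ring
    exact (hcomp.sub h2).sub h3
  have hmono : φ 1 ≤ φ 0 := by
    have hderiv_nonpos : ∀ s ∈ Set.Ioo (0:ℝ) 1, deriv φ s ≤ 0 := by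
      intro s hs
      rw [(hder s).deriv]
      have h1 : ⟪gradient f (x + s • d), d⟫_ℝ - ⟪gradient f x, d⟫_ℝ
          = ⟪gradient f (x + s • d) - gradient f x, d⟫_ℝ := by
        rw [inner_sub_left]
      rw [h1]
      have h2 : ⟪gradient f (x + s • d) - gradient f x, d⟫_ℝ ≤ γ * ‖d‖ ^ 2 * s := by
        calc ⟪gradient f (x + s • d) - gradient f x, d⟫_ℝ
            ≤ ‖gradient f (x + s • d) - gradient f x‖ * ‖d‖ :=
              real_inner_le_norm _ _
          _ ≤ (γ * ‖x + s • d - x‖) * ‖d‖ := by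
              gcongr; exact hlip _ _
          _ = γ * ‖d‖ ^ 2 * s := by
              have : ‖x + s • d - x‖ = s * ‖d‖ := by
                simp [norm_smul, abs_of_nonneg hs.1.le]
              rw [this]; ring
      linarith
    have hc : ContinuousOn φ (Set.Icc 0 1) :=
      (fun s _ => ((hder s).differentiableAt.continuousAt.continuousWithinAt))
    have := antitoneOn_of_deriv_nonpos (convex_Icc (0:ℝ) 1) hc
      (fun s hs => (hder s).differentiableAt.differentiableWithinAt) ?_
    · exact this (by norm_num) (by norm_num) (by norm_num)
    · intro s hs
      rw [interior_Icc] at hs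
      exact hderiv_nonpos s hs
  have h0 : φ 0 = f x := by simp [hφ]
  have h1 : φ 1 = f y - ⟪gradient f x, d⟫_ℝ - γ * ‖d‖ ^ 2 / 2 := by
    simp [hφ, hd]
  rw [h0, h1] at hmono
  nlinarith [hmono]

/-- Exact-constant deterministic core of the convergence theorem: the final gradient
norm is controlled by an `O(1/T)` term plus the average squared update error, up to the
gradient-stability constant `c` near the end of training. -/
theorem convergence_deterministic_core
    {E : Type*} [NormedAddCommGroup E] [InnerProductSpace ℝ E] [CompleteSpace E]
    (γ : ℝ) (hγ : 0 < γ) (μ : ℝ) (hμ : 0 < μ) (hμγ : μ ≤ 1 / γ)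
    (L : ℕ → E → ℝ) (hL : ∀ t, Differentiable ℝ (L t))
    (hL0 : ∀ t x, 0 ≤ L t x)
    (hlip : ∀ t, ∀ x y : E, ‖gradient (L t) x - gradient (L t) y‖ ≤ γ * ‖x - y‖)
    (v : ℕ → E) (θ : ℕ → E)
    (hθ : ∀ t, θ (t + 1) = θ t - μ • v t)
    (hmono : ∀ t, L (t + 1) (θ (t + 1)) ≤ L t (θ (t + 1)))
    (Tε T : ℕ) (hTεT : Tε < T)
    (c : ℝ) (hc : 0 ≤ c)
    (hstab : ∀ t, Tε ≤ t → t < T →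
      ‖gradient (L t) (θ t) - gradient (L T) (θ T)‖ ≤ c)
    (hcsmall : c ≤ ‖gradient (L T) (θ T)‖) :
    (((T : ℝ) - (Tε : ℝ)) / (T : ℝ)) * (‖gradient (L T) (θ T)‖ - c) ^ 2 ≤
      2 * L 0 (θ 0) / (μ * T)
        + (1 / (T : ℝ)) * ∑ t ∈ Finset.range T, ‖v t - gradient (L t) (θ t)‖ ^ 2 := by
  set g : ℕ → E := fun t => gradient (L t) (θ t) with hg
  -- per-step inequality
  have hstep : ∀ t, L (t+1) (θ (t+1)) ≤ L t (θ t) - μ/2 * ‖g t‖^2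
      + μ/2 * ‖v t - g t‖^2 := by
    intro t
    have hdes := descent_lemma (L t) (hL t) γ hγ.le (hlip t) (θ t) (θ (t+1))
    have hδ : θ (t+1) - θ t = -(μ • v t) := by rw [hθ t]; abel
    have hn : ‖θ (t+1) - θ t‖^2 = μ^2 * ‖v t‖^2 := by
      rw [hδ]; rw [norm_neg, norm_smul]
      simp [abs_of_nonneg hμ.le, mul_pow]
    have hin : ⟪g t, θ (t+1) - θ t⟫_ℝ = -(μ * ⟪g t, v t⟫_ℝ) := by
      rw [hδ, inner_neg_right, real_inner_smul_right]
    have hγμ : γ * μ ≤ 1 := by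
      rw [le_div_iff₀ hγ] at hμγ; linarith
    have hquad : γ/2 * (μ^2 * ‖v t‖^2) ≤ μ/2 * ‖v t‖^2 := by
      have h1 : γ/2 * (μ^2 * ‖v t‖^2) = (γ * μ) * (μ/2 * ‖v t‖^2) := by ring
      have h2 : 0 ≤ μ/2 * ‖v t‖^2 := by positivity
      rw [h1]
      nlinarith
    have hexp : ‖v t - g t‖^2 = ‖v t‖^2 - 2 * ⟪g t, v t⟫_ℝ + ‖g t‖^2 := by
      rw [← real_inner_self_eq_norm_sq, inner_sub_sub_self,
        real_inner_self_eq_norm_sq, real_inner_self_eq_norm_sq, real_inner_comm]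
      ring
    have := hmono t
    calc L (t+1) (θ (t+1)) ≤ L t (θ (t+1)) := hmono t
      _ ≤ L t (θ t) + ⟪g t, θ (t+1) - θ t⟫_ℝ + γ/2 * ‖θ (t+1) - θ t‖^2 := hdes
      _ ≤ L t (θ t) - μ * ⟪g t, v t⟫_ℝ + μ/2 * ‖v t‖^2 := by
          rw [hin, hn]; linarith
      _ = L t (θ t) - μ/2 * ‖g t‖^2 + μ/2 * ‖v t - g t‖^2 := by
          rw [hexp]; ring
  -- telescoping
  have htel : μ/2 * ∑ t ∈ range T, ‖g t‖^2 ≤ L 0 (θ 0)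
      + μ/2 * ∑ t ∈ range T, ‖v t - g t‖^2 := by
    have hsum : ∀ n, L n (θ n) + μ/2 * ∑ t ∈ range n, ‖g t‖^2
        ≤ L 0 (θ 0) + μ/2 * ∑ t ∈ range n, ‖v t - g t‖^2 := by
      intro n
      induction n with
      | zero => simp
      | succ n ih =>
        rw [Finset.sum_range_succ, Finset.sum_range_succ]
        have := hstep n
        linarith
    have := hsum T
    have := hL0 T (θ T)
    linarith
  -- lower bound
  have hA : 0 ≤ ‖g T‖ - c := by simp [hg]; linarith [hcsmall]
  have hlow : ((T : ℝ) - Tε) * (‖g T‖ - c)^2 ≤ ∑ t ∈ range T, ‖g t‖^2 := by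
    have h1 : ∀ t ∈ Finset.Ico Tε T, (‖g T‖ - c)^2 ≤ ‖g t‖^2 := by
      intro t ht
      rw [Finset.mem_Ico] at ht
      have h2 := hstab t ht.1 ht.2
      have h3 : ‖g T‖ - c ≤ ‖g t‖ := by
        have := norm_sub_norm_le (g T) (g t)
        have h4 : ‖g T - g t‖ = ‖g t - g T‖ := norm_sub_rev _ _
        simp only [hg] at *
        linarith
      have := sq_nonneg (‖g t‖)
      nlinarith [norm_nonneg (g t)]
    calc ((T : ℝ) - Tε) * (‖g T‖ - c)^2
        = ∑ _t ∈ Finset.Ico Tε T, (‖g T‖ - c)^2 := by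
          rw [Finset.sum_const, Nat.card_Ico, nsmul_eq_mul, Nat.cast_sub hTεT.le]
      _ ≤ ∑ t ∈ Finset.Ico Tε T, ‖g t‖^2 := Finset.sum_le_sum h1
      _ ≤ ∑ t ∈ range T, ‖g t‖^2 := by
          apply Finset.sum_le_sum_of_subset_of_nonneg
          · intro t ht; rw [Finset.mem_Ico] at ht; exact Finset.mem_range.2 ht.2
          · intros; positivity
  -- combine
  have hT : (0:ℝ) < T := by
    exact_mod_cast Nat.pos_of_ne_zero (by omega)
  have hS : ∑ t ∈ range T, ‖g t‖^2 ≤ 2 * L 0 (θ 0) / μ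
      + ∑ t ∈ range T, ‖v t - g t‖^2 := by
    have h2 : 2 * L 0 (θ 0) / μ = (2/μ) * L 0 (θ 0) := by ring
    rw [h2]
    have := mul_le_mul_of_nonneg_left htel (le_of_lt (by positivity : (0:ℝ) < 2/μ))
    calc ∑ t ∈ range T, ‖g t‖^2
        = (2/μ) * (μ/2 * ∑ t ∈ range T, ‖g t‖^2) := by field_simp
      _ ≤ (2/μ) * (L 0 (θ 0) + μ/2 * ∑ t ∈ range T, ‖v t - g t‖^2) := this
      _ = (2/μ) * L 0 (θ 0) + ∑ t ∈ range T, ‖v t - g t‖^2 := by field_simp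
  have hfinal : ((T : ℝ) - Tε) * (‖g T‖ - c)^2 ≤ 2 * L 0 (θ 0) / μ
      + ∑ t ∈ range T, ‖v t - g t‖^2 := le_trans hlow hS
  have key : (((T : ℝ) - Tε) / T) * (‖g T‖ - c)^2
      ≤ (2 * L 0 (θ 0) / μ + ∑ t ∈ range T, ‖v t - g t‖^2) / T := by
    rw [div_mul_eq_mul_div, div_le_div_iff₀ hT hT]
    nlinarith [hfinal, hT]
  calc (((T : ℝ) - Tε) / T) * (‖g T‖ - c)^2
      ≤ (2 * L 0 (θ 0) / μ + ∑ t ∈ range T, ‖v t - g t‖^2) / T := key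
    _ = 2 * L 0 (θ 0) / (μ * T) + (1 / (T:ℝ)) * ∑ t ∈ range T, ‖v t - g t‖^2 := by
        field_simp
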